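/- arXiv:1102.3867 — 2 statements merged into one kernel-verified Lean document; each statement's English description precedes it below -/
import Mathlib

section
/- Let m ≥ 2, T > 0, and define p(x,t) = φ(x)·exp(m²π²(t-T)/(m-1)²) where φ(x) = sin(mπx) on [0,1/m) and φ(x) = (1-m)sin(π(mx-1)/(m-1)) on [1/m,1]. Then p satisfies -p_t = p_{xx} + h in (0,1/m)×(0,T) and in (1/m,1)×(0,T), where h(x,t) = ((m-2)m³π²/(m-1)²)·sin(mπx)·exp(m²π²(t-T)/(m-1)²) for x ∈ [0,1/m) and h(x,t) = 0 for x ∈ [1/m,1]; moreover h ≥ 0 on [0,1]×[0,T] and p ≤ 0 on [1/m,1]×[0,T]. -/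
open Real Set

theorem adjoint_solution_properties (m : ℕ) (hm : 2 ≤ m) (T : ℝ) (hT : 0 < T)
    (p h : ℝ → ℝ → ℝ)
    (hp : ∀ x t : ℝ, p x t =
      (if x < 1 / (m : ℝ) then Real.sin (m * π * x)
       else (1 - (m : ℝ)) * Real.sin (π * ((m : ℝ) * x - 1) / ((m : ℝ) - 1))) *
      Real.exp ((m : ℝ) ^ 2 * π ^ 2 * (t - T) / ((m : ℝ) - 1) ^ 2))
    (hh : ∀ x t : ℝ, h x t =
      if x < 1 / (m : ℝ) then
        (((m : ℝ) - 2) * (m : ℝ) ^ 3 * π ^ 2 / ((m : ℝ) - 1) ^ 2) *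
          Real.sin (m * π * x) *
          Real.exp ((m : ℝ) ^ 2 * π ^ 2 * (t - T) / ((m : ℝ) - 1) ^ 2)
      else 0) :
    (∀ x ∈ Set.Ioo (0 : ℝ) (1 / (m : ℝ)), ∀ t ∈ Set.Ioo (0 : ℝ) T,
      -(deriv (fun τ => p x τ) t) = deriv (deriv (fun ξ => p ξ t)) x + h x t) ∧
    (∀ x ∈ Set.Ioo (1 / (m : ℝ)) 1, ∀ t ∈ Set.Ioo (0 : ℝ) T,
      -(deriv (fun τ => p x τ) t) = deriv (deriv (fun ξ => p ξ t)) x + h x t) ∧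
    (∀ x ∈ Set.Icc (0 : ℝ) 1, ∀ t ∈ Set.Icc (0 : ℝ) T, 0 ≤ h x t) ∧
    (∀ x ∈ Set.Icc (1 / (m : ℝ)) 1, ∀ t ∈ Set.Icc (0 : ℝ) T, p x t ≤ 0) := by
  have h2 : (2:ℝ) ≤ (m:ℝ) := by exact_mod_cast hm
  set M : ℝ := (m:ℝ) with hMdef
  have hMpos : (0:ℝ) < M := by linarith
  have hM1 : (0:ℝ) < M - 1 := by linarith
  have hM1ne : M - 1 ≠ 0 := ne_of_gt hM1
  have hπ : (0:ℝ) < π := Real.pi_pos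
  -- time derivative
  have htd : ∀ (A t : ℝ),
      HasDerivAt (fun τ => A * Real.exp (M ^ 2 * π ^ 2 * (τ - T) / (M - 1) ^ 2))
      (A * (M ^ 2 * π ^ 2 / (M - 1) ^ 2) *
        Real.exp (M ^ 2 * π ^ 2 * (t - T) / (M - 1) ^ 2)) t := by
    intro A t
    have h1 : HasDerivAt (fun τ : ℝ => M ^ 2 * π ^ 2 * (τ - T) / (M - 1) ^ 2)
        (M ^ 2 * π ^ 2 * 1 / (M - 1) ^ 2) t :=
      (((hasDerivAt_id t).sub_const T).const_mul (M ^ 2 * π ^ 2)).div_const ((M - 1) ^ 2)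
    have h3 := h1.exp.const_mul A
    refine h3.congr_deriv ?_
    ring
  refine ⟨?_, ?_, ?_, ?_⟩
  · -- region 1
    intro x hx t ht
    set E := Real.exp (M ^ 2 * π ^ 2 * (t - T) / (M - 1) ^ 2) with hE
    have hfun : (fun τ => p x τ) =
        fun τ => Real.sin (M * π * x) * Real.exp (M ^ 2 * π ^ 2 * (τ - T) / (M - 1) ^ 2) := by
      funext τ; rw [hp x τ, if_pos hx.2]
    have hdt : deriv (fun τ => p x τ) t =
        Real.sin (M * π * x) * (M ^ 2 * π ^ 2 / (M - 1) ^ 2) * E := by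
      rw [hfun]; exact (htd _ t).deriv
    have hev : (fun ξ => p ξ t) =ᶠ[nhds x] fun ξ => Real.sin (M * π * ξ) * E := by
      filter_upwards [isOpen_Ioo.mem_nhds hx] with ξ hξ
      rw [hp ξ t, if_pos hξ.2]
    have hlin : ∀ y : ℝ, HasDerivAt (fun ξ : ℝ => M * π * ξ) (M * π) y := by
      intro y; simpa using (hasDerivAt_id y).const_mul (M * π)
    have hd1 : ∀ y : ℝ, HasDerivAt (fun ξ => Real.sin (M * π * ξ) * E)
        (M * π * Real.cos (M * π * y) * E) y := by
      intro y
      have h3 := ((hlin y).sin).mul_const E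
      refine h3.congr_deriv ?_; ring
    have hderiv1 : deriv (fun ξ => Real.sin (M * π * ξ) * E) =
        fun y => M * π * Real.cos (M * π * y) * E := by
      funext y; exact (hd1 y).deriv
    have hd2 : HasDerivAt (fun y => M * π * Real.cos (M * π * y) * E)
        (-(M * π) ^ 2 * Real.sin (M * π * x) * E) x := by
      have h3 := ((hlin x).cos.const_mul (M * π)).mul_const E
      refine h3.congr_deriv ?_; ring
    have hdxx : deriv (deriv (fun ξ => p ξ t)) x = -(M * π) ^ 2 * Real.sin (M * π * x) * E := by
      rw [hev.deriv.deriv_eq, hderiv1]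
      exact hd2.deriv
    rw [hdt, hdxx, hh x t, if_pos hx.2]
    rw [← hE]
    field_simp
    ring
  · -- region 2
    intro x hx t ht
    set E := Real.exp (M ^ 2 * π ^ 2 * (t - T) / (M - 1) ^ 2) with hE
    have hxn : ¬ x < 1 / M := not_lt.mpr hx.1.le
    have hfun : (fun τ => p x τ) =
        fun τ => ((1 - M) * Real.sin (π * (M * x - 1) / (M - 1))) *
          Real.exp (M ^ 2 * π ^ 2 * (τ - T) / (M - 1) ^ 2) := by
      funext τ; rw [hp x τ, if_neg hxn]
    have hdt : deriv (fun τ => p x τ) t =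
        ((1 - M) * Real.sin (π * (M * x - 1) / (M - 1))) * (M ^ 2 * π ^ 2 / (M - 1) ^ 2) * E := by
      rw [hfun]; exact (htd _ t).deriv
    have hev : (fun ξ => p ξ t) =ᶠ[nhds x] fun ξ =>
        (1 - M) * Real.sin (π * (M * ξ - 1) / (M - 1)) * E := by
      filter_upwards [isOpen_Ioo.mem_nhds hx] with ξ hξ
      rw [hp ξ t, if_neg (not_lt.mpr hξ.1.le)]
    have hlin : ∀ y : ℝ, HasDerivAt (fun ξ : ℝ => π * (M * ξ - 1) / (M - 1))
        (π * (M * 1) / (M - 1)) y := by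
      intro y
      exact ((((hasDerivAt_id y).const_mul M).sub_const 1).const_mul π).div_const (M - 1)
    have hd1 : ∀ y : ℝ, HasDerivAt (fun ξ => (1 - M) * Real.sin (π * (M * ξ - 1) / (M - 1)) * E)
        ((1 - M) * (π * M / (M - 1)) * Real.cos (π * (M * y - 1) / (M - 1)) * E) y := by
      intro y
      have h3 := (((hlin y).sin).const_mul (1 - M)).mul_const E
      refine h3.congr_deriv ?_; ring
    have hderiv1 : deriv (fun ξ => (1 - M) * Real.sin (π * (M * ξ - 1) / (M - 1)) * E) =
        fun y => (1 - M) * (π * M / (M - 1)) * Real.cos (π * (M * y - 1) / (M - 1)) * E := by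
      funext y; exact (hd1 y).deriv
    have hd2 : HasDerivAt (fun y => (1 - M) * (π * M / (M - 1)) *
        Real.cos (π * (M * y - 1) / (M - 1)) * E)
        (-((1 - M) * (π * M / (M - 1)) ^ 2 * Real.sin (π * (M * x - 1) / (M - 1)) * E)) x := by
      have h3 := ((hlin x).cos.const_mul ((1 - M) * (π * M / (M - 1)))).mul_const E
      refine h3.congr_deriv ?_; ring
    have hdxx : deriv (deriv (fun ξ => p ξ t)) x =
        -((1 - M) * (π * M / (M - 1)) ^ 2 * Real.sin (π * (M * x - 1) / (M - 1)) * E) := by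
      rw [hev.deriv.deriv_eq, hderiv1]
      exact hd2.deriv
    rw [hdt, hdxx, hh x t, if_neg hxn]
    have hk : (M ^ 2 * π ^ 2 / (M - 1) ^ 2) = (π * M / (M - 1)) ^ 2 := by
      field_simp
    rw [hk]; ring
  · -- h nonneg
    intro x hx t ht
    rw [hh x t]
    split_ifs with hxlt
    · have hsin : 0 ≤ Real.sin (M * π * x) := by
        apply Real.sin_nonneg_of_nonneg_of_le_pi
        · have := hx.1
          positivity
        · have hmx : x * M < 1 := (lt_div_iff₀ hMpos).mp hxlt
          nlinarith [mul_pos hπ (show (0:ℝ) < 1 - x * M by linarith)]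
      have hc : 0 ≤ (M - 2) * M ^ 3 * π ^ 2 / (M - 1) ^ 2 := by
        apply div_nonneg _ (by positivity)
        apply mul_nonneg (mul_nonneg (by linarith) (by positivity)) (by positivity)
      exact mul_nonneg (mul_nonneg hc hsin) (Real.exp_pos _).le
    · exact le_refl 0
  · -- p nonpos
    intro x hx t ht
    rw [hp x t, if_neg (not_lt.mpr hx.1)]
    have hsin : 0 ≤ Real.sin (π * (M * x - 1) / (M - 1)) := by
      apply Real.sin_nonneg_of_nonneg_of_le_pi
      · apply div_nonneg _ hM1.le
        have : 1 ≤ M * x := by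
          have := hx.1
          calc (1:ℝ) = M * (1 / M) := by field_simp
          _ ≤ M * x := by exact mul_le_mul_of_nonneg_left this hMpos.le
        nlinarith
      · rw [div_le_iff₀ hM1]
        have hx1 : x ≤ 1 := hx.2
        have hMx : M * x ≤ M * 1 := mul_le_mul_of_nonneg_left hx1 hMpos.le
        exact mul_le_mul_of_nonneg_left (by linarith) hπ.le
    have h1 : (1 - M) * Real.sin (π * (M * x - 1) / (M - 1)) ≤ 0 :=
      mul_nonpos_of_nonpos_of_nonneg (by linarith) hsin
    exact mul_nonpos_of_nonpos_of_nonneg h1 (Real.exp_pos _).le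
end

section
/- Let v ∈ C[0,1] with v ≤ 0, and let y ∈ C^{2,1}([0,1]×[0,T]) be a classical nonnegative solution of y_t = y_{xx} + v(x)y with y(0,t) = y(1,t) = 0 and y(·,0) = y₀ ∈ C²[0,1], y₀ ≥ 0, y₀ ≢ 0, y₀(0)=y₀(1)=0. Then 0 ≤ y_x(0,t) ≤ e·max_{x∈[0,1]}(y₀'(x)·e^{y₀(x)}) for all t ∈ [0,T]. -/
open Real Set Filter Topology

set_option maxHeartbeats 1000000

lemma aux_slope_left {f : ℝ → ℝ} {a : ℝ} (hf : DifferentiableAt ℝ f a)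
    (h : ∀ᶠ t in 𝓝[<] a, f t ≤ f a) : 0 ≤ deriv f a := by
  have hs : Tendsto (slope f a) (𝓝[≠] a) (𝓝 (deriv f a)) :=
    hasDerivAt_iff_tendsto_slope.mp hf.hasDerivAt
  have hs' : Tendsto (slope f a) (𝓝[<] a) (𝓝 (deriv f a)) :=
    hs.mono_left (nhdsWithin_mono a fun x hx => ne_of_lt hx)
  refine ge_of_tendsto hs' ?_
  filter_upwards [h, self_mem_nhdsWithin] with t ht ht'
  rw [slope_def_field]
  have : t - a < 0 := sub_neg.2 ht'
  rw [div_nonneg_iff]; right; exact ⟨by linarith, by linarith⟩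

lemma aux_slope_right_le {f : ℝ → ℝ} {a : ℝ} (hf : DifferentiableAt ℝ f a)
    (h : ∀ᶠ t in 𝓝[>] a, f t ≤ f a) : deriv f a ≤ 0 := by
  have hs : Tendsto (slope f a) (𝓝[≠] a) (𝓝 (deriv f a)) :=
    hasDerivAt_iff_tendsto_slope.mp hf.hasDerivAt
  have hs' : Tendsto (slope f a) (𝓝[>] a) (𝓝 (deriv f a)) :=
    hs.mono_left (nhdsWithin_mono a fun x hx => ne_of_gt hx)
  refine le_of_tendsto hs' ?_
  filter_upwards [h, self_mem_nhdsWithin] with t ht ht'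
  rw [slope_def_field]
  have : 0 < t - a := sub_pos.2 ht'
  exact div_nonpos_of_nonpos_of_nonneg (by linarith) (by linarith)

lemma aux_slope_right_ge {f : ℝ → ℝ} {a : ℝ} (hf : DifferentiableAt ℝ f a)
    (h : ∀ᶠ t in 𝓝[>] a, f a ≤ f t) : 0 ≤ deriv f a := by
  have hs : Tendsto (slope f a) (𝓝[≠] a) (𝓝 (deriv f a)) :=
    hasDerivAt_iff_tendsto_slope.mp hf.hasDerivAt
  have hs' : Tendsto (slope f a) (𝓝[>] a) (𝓝 (deriv f a)) :=
    hs.mono_left (nhdsWithin_mono a fun x hx => ne_of_gt hx)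
  refine ge_of_tendsto hs' ?_
  filter_upwards [h, self_mem_nhdsWithin] with t ht ht'
  rw [slope_def_field]
  have : 0 < t - a := sub_pos.2 ht'
  exact div_nonneg (by linarith) (by linarith)

lemma aux_contdiff_two_deriv {f : ℝ → ℝ} (hf : ContDiff ℝ 2 f) :
    ContDiff ℝ 1 (deriv f) := by
  have := (contDiff_succ_iff_deriv (n := 1) (f := f)).mp (by exact_mod_cast hf)
  exact this.2.2

lemma aux_deriv2_nonpos {f : ℝ → ℝ} {a : ℝ} (hf : ContDiff ℝ 2 f)
    (h : IsLocalMax f a) : deriv (deriv f) a ≤ 0 := by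
  by_contra hc
  push_neg at hc
  have hdf : ContDiff ℝ 1 (deriv f) := aux_contdiff_two_deriv hf
  have h0 : deriv f a = 0 := h.deriv_eq_zero
  have hD : HasDerivAt (deriv f) (deriv (deriv f) a) a :=
    (hdf.differentiable one_ne_zero a).hasDerivAt
  have hs : Tendsto (slope (deriv f) a) (𝓝[≠] a) (𝓝 (deriv (deriv f) a)) :=
    hasDerivAt_iff_tendsto_slope.mp hD
  have hev : ∀ᶠ t in 𝓝[>] a, 0 < slope (deriv f) a t :=
    (hs.mono_left (nhdsWithin_mono a fun x hx => ne_of_gt hx)).eventually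
      (eventually_gt_nhds hc)
  have hev2 : ∀ᶠ t in 𝓝[>] a, 0 < deriv f t := by
    filter_upwards [hev, self_mem_nhdsWithin] with t ht ht'
    rw [slope_def_field, h0, sub_zero] at ht
    have h1 : 0 < t - a := sub_pos.2 ht'
    by_contra hcon
    push_neg at hcon
    nlinarith [div_nonpos_of_nonpos_of_nonneg hcon h1.le]
  have hev3 : ∀ᶠ t in 𝓝[>] a, f t ≤ f a :=
    nhdsWithin_le_nhds h
  obtain ⟨u, hu, hsub⟩ := mem_nhdsGT_iff_exists_Ioo_subset.mp (hev2.and hev3)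
  have hau : a < u := hu
  set b := (a + u) / 2 with hb
  have hab : a < b := by simp [hb]; linarith
  have hbu : b < u := by simp [hb]; linarith
  have hmono : StrictMonoOn f (Icc a b) := by
    refine strictMonoOn_of_deriv_pos (convex_Icc a b) hf.continuous.continuousOn ?_
    intro x hx
    rw [interior_Icc] at hx
    exact (hsub ⟨hx.1, hx.2.trans hbu⟩).1
  have : f a < f b := hmono (left_mem_Icc.2 hab.le) (right_mem_Icc.2 hab.le) hab
  exact absurd (hsub ⟨hab, hbu⟩).2 (not_le.2 this)

/-- Proposition 4.1 b): bounds on the spatial derivative at `x = 0`. -/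
theorem normal_derivative_bound_at_zero (T : ℝ) (hT : 0 < T)
    (v : ℝ → ℝ) (hvcont : ContinuousOn v (Set.Icc 0 1))
    (hv : ∀ x ∈ Set.Icc (0:ℝ) 1, v x ≤ 0)
    (y₀ : ℝ → ℝ) (hy₀reg : ContDiff ℝ 2 y₀)
    (hy₀pos : ∀ x ∈ Set.Icc (0:ℝ) 1, 0 ≤ y₀ x)
    (hy₀ne : ∃ x ∈ Set.Icc (0:ℝ) 1, y₀ x ≠ 0)
    (hy₀bc : y₀ 0 = 0 ∧ y₀ 1 = 0)
    (y : ℝ → ℝ → ℝ)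
    (hyreg : ContDiff ℝ 2 (fun q : ℝ × ℝ => y q.1 q.2))
    (hynn : ∀ x ∈ Set.Icc (0:ℝ) 1, ∀ t ∈ Set.Icc (0:ℝ) T, 0 ≤ y x t)
    (hPDE : ∀ x ∈ Set.Ioo (0:ℝ) 1, ∀ t ∈ Set.Ioo (0:ℝ) T,
      deriv (fun τ => y x τ) t = deriv (deriv (fun ξ => y ξ t)) x + v x * y x t)
    (hbc : ∀ t ∈ Set.Icc (0:ℝ) T, y 0 t = 0 ∧ y 1 t = 0)
    (hic : ∀ x : ℝ, y x 0 = y₀ x) :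
    ∀ t ∈ Set.Icc (0:ℝ) T,
      0 ≤ deriv (fun ξ => y ξ t) 0 ∧
      deriv (fun ξ => y ξ t) 0 ≤
        Real.exp 1 * sSup ((fun x => deriv y₀ x * Real.exp (y₀ x)) '' Set.Icc 0 1) := by
  -- notation
  set F : ℝ → ℝ := fun x => deriv y₀ x * Real.exp (y₀ x) with hF
  set ρ : ℝ := sSup (F '' Set.Icc 0 1) with hρ
  -- regularity of slices
  have hslice : ∀ t : ℝ, ContDiff ℝ 2 (fun ξ => y ξ t) := fun t =>
    hyreg.comp (contDiff_id.prodMk contDiff_const)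
  have htime : ∀ x : ℝ, ContDiff ℝ 2 (fun τ => y x τ) := fun x =>
    hyreg.comp (contDiff_const.prodMk contDiff_id)
  -- F facts
  have hFcont : Continuous F := by
    have : Continuous (deriv y₀) := (aux_contdiff_two_deriv hy₀reg).continuous
    exact this.mul (Real.continuous_exp.comp hy₀reg.continuous)
  have hFbdd : BddAbove (F '' Set.Icc 0 1) :=
    (isCompact_Icc.image hFcont).bddAbove
  have hFle : ∀ x ∈ Set.Icc (0:ℝ) 1, F x ≤ ρ := fun x hx =>
    le_csSup hFbdd ⟨x, hx, rfl⟩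
  -- ρ > 0
  have hρpos : 0 < ρ := by
    obtain ⟨x₁, hx₁, hne⟩ := hy₀ne
    have hx₁pos : 0 < y₀ x₁ := lt_of_le_of_ne (hy₀pos _ hx₁) (Ne.symm hne)
    have hx₁0 : 0 < x₁ := by
      rcases hx₁.1.lt_or_eq with h | h
      · exact h
      · exact absurd (h ▸ hy₀bc.1) (by rw [← h] at hx₁pos ⊢; linarith)
    obtain ⟨c, hc, hder⟩ := exists_hasDerivAt_eq_slope y₀ (deriv y₀) hx₁0
      hy₀reg.continuous.continuousOn
      (fun x _ => (hy₀reg.differentiable (by norm_num) x).hasDerivAt)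
    have hpos : 0 < deriv y₀ c := by
      rw [hder, hy₀bc.1, sub_zero, sub_zero]
      exact div_pos hx₁pos hx₁0
    have hcmem : c ∈ Set.Icc (0:ℝ) 1 := ⟨hc.1.le, hc.2.le.trans hx₁.2⟩
    calc (0:ℝ) < F c := mul_pos hpos (Real.exp_pos _)
      _ ≤ ρ := hFle c hcmem
  -- the Bernstein function
  set w : ℝ → ℝ → ℝ := fun x t => Real.exp (y x t) + ρ * Real.exp (1 - x) - 1 with hw
  -- spatial derivative of w
  have hWd1 : ∀ t x : ℝ, HasDerivAt (fun ξ => w ξ t)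
      (deriv (fun ξ => y ξ t) x * Real.exp (y x t) - ρ * Real.exp (1 - x)) x := by
    intro t x
    have h1 : HasDerivAt (fun ξ => Real.exp (y ξ t))
        (Real.exp (y x t) * deriv (fun ξ => y ξ t) x) x :=
      (((hslice t).differentiable (by norm_num) x).hasDerivAt).exp
    have h2 : HasDerivAt (fun ξ => ρ * Real.exp (1 - ξ)) (ρ * (Real.exp (1 - x) * (-1))) x :=
      (((hasDerivAt_id x).const_sub 1).exp).const_mul ρ
    have := (h1.add h2).sub_const 1
    refine this.congr_deriv ?_
    ring
  have hderivW : ∀ t : ℝ, deriv (fun ξ => w ξ t)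
      = fun x => deriv (fun ξ => y ξ t) x * Real.exp (y x t) - ρ * Real.exp (1 - x) :=
    fun t => funext fun x => (hWd1 t x).deriv
  -- second spatial derivative of w
  have hWd2 : ∀ t x : ℝ, deriv (deriv (fun ξ => w ξ t)) x
      = deriv (deriv (fun ξ => y ξ t)) x * Real.exp (y x t)
        + (deriv (fun ξ => y ξ t) x)^2 * Real.exp (y x t) + ρ * Real.exp (1 - x) := by
    intro t x
    rw [hderivW t]
    have hdsl : ContDiff ℝ 1 (deriv (fun ξ => y ξ t)) := aux_contdiff_two_deriv (hslice t)
    have h1 : HasDerivAt (deriv (fun ξ => y ξ t)) (deriv (deriv (fun ξ => y ξ t)) x) x :=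
      (hdsl.differentiable one_ne_zero x).hasDerivAt
    have h2 : HasDerivAt (fun ξ => Real.exp (y ξ t))
        (Real.exp (y x t) * deriv (fun ξ => y ξ t) x) x :=
      (((hslice t).differentiable (by norm_num) x).hasDerivAt).exp
    have h3 : HasDerivAt (fun ξ => ρ * Real.exp (1 - ξ)) (ρ * (Real.exp (1 - x) * (-1))) x :=
      (((hasDerivAt_id x).const_sub 1).exp).const_mul ρ
    have h4 := (h1.mul h2).sub h3
    refine h4.deriv.trans ?_
    ring
  -- time derivative of w
  have hWt : ∀ x t : ℝ, HasDerivAt (fun τ => w x τ)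
      (Real.exp (y x t) * deriv (fun τ => y x τ) t) t := by
    intro x t
    have h1 : HasDerivAt (fun τ => Real.exp (y x τ))
        (Real.exp (y x t) * deriv (fun τ => y x τ) t) t :=
      (((htime x).differentiable (by norm_num) t).hasDerivAt).exp
    have := (h1.add_const (ρ * Real.exp (1 - x))).sub_const 1
    exact this
  -- continuity of w jointly
  have hWcont : Continuous (fun q : ℝ × ℝ => w q.1 q.2) := by
    apply Continuous.sub
    apply Continuous.add
    · exact Real.continuous_exp.comp hyreg.continuous
    · exact (continuous_const.mul (Real.continuous_exp.comp
        (continuous_const.sub continuous_fst)))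
    · exact continuous_const
  -- boundary values
  have hw0 : ∀ t ∈ Set.Icc (0:ℝ) T, w 0 t = ρ * Real.exp 1 := by
    intro t ht
    simp only [hw, (hbc t ht).1, Real.exp_zero, sub_zero]
    ring
  have hw1 : ∀ t ∈ Set.Icc (0:ℝ) T, w 1 t = ρ := by
    intro t ht
    simp only [hw, (hbc t ht).2, Real.exp_zero, sub_self, mul_one]
    ring
  -- monotonicity of initial profile
  have hwinit : ∀ x ∈ Set.Icc (0:ℝ) 1, w x 0 ≤ ρ * Real.exp 1 := by
    intro x hx
    set g : ℝ → ℝ := fun ξ => Real.exp (y₀ ξ) + ρ * Real.exp (1 - ξ) with hg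
    have hgd : ∀ ξ : ℝ, HasDerivAt g (F ξ * 1 - ρ * Real.exp (1 - ξ)) ξ := by
      intro ξ
      have h1 : HasDerivAt (fun ζ => Real.exp (y₀ ζ)) (Real.exp (y₀ ξ) * deriv y₀ ξ) ξ :=
        ((hy₀reg.differentiable (by norm_num) ξ).hasDerivAt).exp
      have h2 : HasDerivAt (fun ζ => ρ * Real.exp (1 - ζ)) (ρ * (Real.exp (1 - ξ) * (-1))) ξ :=
        (((hasDerivAt_id ξ).const_sub 1).exp).const_mul ρ
      have := h1.add h2
      refine this.congr_deriv ?_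
      simp only [hF]; ring
    have hanti : AntitoneOn g (Set.Icc 0 1) := by
      refine antitoneOn_of_deriv_nonpos (convex_Icc 0 1) ?_ ?_ ?_
      · exact Continuous.continuousOn (by
          exact (Real.continuous_exp.comp hy₀reg.continuous).add
            (continuous_const.mul (Real.continuous_exp.comp (continuous_const.sub continuous_id))))
      · intro ξ _
        exact ((hgd ξ).differentiableAt).differentiableWithinAt
      · intro ξ hξ
        rw [interior_Icc] at hξ
        rw [(hgd ξ).deriv]
        have h1 : F ξ ≤ ρ := hFle ξ ⟨hξ.1.le, hξ.2.le⟩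
        have h2 : (1:ℝ) ≤ Real.exp (1 - ξ) := Real.one_le_exp (by linarith [hξ.2])
        nlinarith
    have : g x ≤ g 0 := hanti (left_mem_Icc.2 (by norm_num)) hx hx.1
    have hg0 : g 0 = 1 + ρ * Real.exp 1 := by
      simp [hg, hy₀bc.1]
    have hwx : w x 0 = g x - 1 := by
      simp only [hw, hg, hic x]
    linarith
  -- maximum principle on truncated cylinders
  have keyT' : ∀ T' ∈ Set.Ioo (0:ℝ) T, ∀ x ∈ Set.Icc (0:ℝ) 1, ∀ t ∈ Set.Icc (0:ℝ) T',
      w x t ≤ ρ * Real.exp 1 := by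
    intro T' hT' x hx t ht
    set K : Set (ℝ × ℝ) := Set.Icc 0 1 ×ˢ Set.Icc 0 T' with hK
    have hKc : IsCompact K := isCompact_Icc.prod isCompact_Icc
    have hKne : K.Nonempty := ⟨(0, 0), ⟨⟨le_rfl, by norm_num⟩, ⟨le_rfl, hT'.1.le⟩⟩⟩
    obtain ⟨⟨xs, ts⟩, hmem, hmax⟩ := hKc.exists_isMaxOn hKne hWcont.continuousOn
    have hxs : xs ∈ Set.Icc (0:ℝ) 1 := hmem.1
    have hts : ts ∈ Set.Icc (0:ℝ) T' := hmem.2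
    have htsT : ts ∈ Set.Icc (0:ℝ) T := ⟨hts.1, hts.2.trans hT'.2.le⟩
    have hmaxP : ∀ x' ∈ Set.Icc (0:ℝ) 1, ∀ t' ∈ Set.Icc (0:ℝ) T', w x' t' ≤ w xs ts :=
      fun x' hx' t' ht' => isMaxOn_iff.mp hmax (x', t') (Set.mk_mem_prod hx' ht')
    have hle : w x t ≤ w xs ts := hmaxP x hx t ht
    suffices h : w xs ts ≤ ρ * Real.exp 1 by linarith
    by_cases hxs0 : xs = 0
    · rw [hxs0, hw0 ts htsT]
    by_cases hxs1 : xs = 1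
    · rw [hxs1, hw1 ts htsT]
      nlinarith [Real.add_one_le_exp (1:ℝ)]
    by_cases hts0 : ts = 0
    · rw [hts0]; exact hwinit xs hxs
    -- interior case: contradiction
    exfalso
    have hxsI : xs ∈ Set.Ioo (0:ℝ) 1 :=
      ⟨hxs.1.lt_of_ne (Ne.symm hxs0), hxs.2.lt_of_ne hxs1⟩
    have htsI : ts ∈ Set.Ioo (0:ℝ) T :=
      ⟨hts.1.lt_of_ne (Ne.symm hts0), lt_of_le_of_lt hts.2 hT'.2⟩
    -- spatial part
    have hfC2 : ContDiff ℝ 2 (fun ξ => w ξ ts) := by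
      apply ContDiff.sub
      apply ContDiff.add
      · exact (hslice ts).exp
      · exact ContDiff.mul contDiff_const ((contDiff_const.sub contDiff_id).exp)
      · exact contDiff_const
    have hlocmax : IsLocalMax (fun ξ => w ξ ts) xs := by
      have hnhds : Set.Icc (0:ℝ) 1 ∈ 𝓝 xs := Icc_mem_nhds hxsI.1 hxsI.2
      filter_upwards [hnhds] with ξ hξ
      exact hmaxP ξ hξ ts hts
    have hd2 : deriv (deriv (fun ξ => w ξ ts)) xs ≤ 0 := aux_deriv2_nonpos hfC2 hlocmax
    rw [hWd2 ts xs] at hd2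
    -- time part
    have hdt : 0 ≤ deriv (fun τ => w xs τ) ts := by
      apply aux_slope_left (hWt xs ts).differentiableAt
      have hIoo : Set.Ioo (0:ℝ) ts ∈ 𝓝[<] ts := Ioo_mem_nhdsLT_of_mem ⟨htsI.1, le_rfl⟩
      filter_upwards [hIoo] with τ hτ
      exact hmaxP xs hxs τ ⟨hτ.1.le, hτ.2.le.trans hts.2⟩
    rw [(hWt xs ts).deriv] at hdt
    -- combine with PDE
    have hpde := hPDE xs hxsI ts htsI
    rw [hpde] at hdt
    have hE : (0:ℝ) < Real.exp (y xs ts) := Real.exp_pos _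
    have hEx : (0:ℝ) < Real.exp (1 - xs) := Real.exp_pos _
    have hvy : v xs * y xs ts ≤ 0 :=
      mul_nonpos_of_nonpos_of_nonneg (hv xs hxs) (hynn xs hxs ts htsT)
    nlinarith [sq_nonneg (deriv (fun ξ => y ξ ts) xs), mul_pos hρpos hEx,
      mul_pos hE (mul_pos hρpos hEx)]
  -- full maximum principle
  have key : ∀ x ∈ Set.Icc (0:ℝ) 1, ∀ t ∈ Set.Icc (0:ℝ) T, w x t ≤ ρ * Real.exp 1 := by
    intro x hx t ht
    rcases ht.2.lt_or_eq with hlt | heq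
    · have hT2 : (0:ℝ) < T / 2 := by linarith
      refine keyT' (max t (T/2)) ⟨lt_of_lt_of_le hT2 (le_max_right _ _), ?_⟩ x hx t
        ⟨ht.1, le_max_left _ _⟩
      exact max_lt hlt (by linarith)
    · subst heq
      have htd : Tendsto (fun τ => w x τ) (𝓝[<] t) (𝓝 (w x t)) :=
        ((hWt x t).differentiableAt.continuousAt).continuousWithinAt
      refine le_of_tendsto htd ?_
      have hIoo : Set.Ioo (0:ℝ) t ∈ 𝓝[<] t := Ioo_mem_nhdsLT_of_mem ⟨hT, le_rfl⟩
      filter_upwards [hIoo] with τ hτ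
      have hT2 : (0:ℝ) < t / 2 := by linarith
      refine keyT' (max τ (t/2)) ⟨lt_of_lt_of_le hT2 (le_max_right _ _), ?_⟩ x hx τ
        ⟨hτ.1.le, le_max_left _ _⟩
      exact max_lt hτ.2 (by linarith)
  -- conclusion
  intro t ht
  have hy0t : y 0 t = 0 := (hbc t ht).1
  constructor
  · -- lower bound
    apply aux_slope_right_ge ((hslice t).differentiable (by norm_num) 0)
    have hIoo : Set.Ioo (0:ℝ) 1 ∈ 𝓝[>] (0:ℝ) :=
      Ioo_mem_nhdsGT_of_mem ⟨le_rfl, by norm_num⟩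
    filter_upwards [hIoo] with ξ hξ
    simp only [hy0t]
    exact hynn ξ ⟨hξ.1.le, hξ.2.le⟩ t ht
  · -- upper bound
    have hdle : deriv (fun ξ => w ξ t) 0 ≤ 0 := by
      apply aux_slope_right_le (hWd1 t 0).differentiableAt
      have hIoo : Set.Ioo (0:ℝ) 1 ∈ 𝓝[>] (0:ℝ) :=
        Ioo_mem_nhdsGT_of_mem ⟨le_rfl, by norm_num⟩
      filter_upwards [hIoo] with ξ hξ
      have h1 : w ξ t ≤ ρ * Real.exp 1 := key ξ ⟨hξ.1.le, hξ.2.le⟩ t ht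
      have h2 : w 0 t = ρ * Real.exp 1 := hw0 t ht
      linarith
    rw [(hWd1 t 0).deriv] at hdle
    rw [hy0t, Real.exp_zero, mul_one, sub_zero] at hdle
    rw [hρ, hF] at hdle ⊢
    linarith [hdle]
end
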